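/- Let L > 0, x₀ ∈ [0, L/2), and n ∈ ℕ with sin((nπ/L)(L/2 - x₀)) ≠ 0 and sin((nπ/L)(L/2 + x₀)) ≠ 0. Then, with r(ν_n) denoting the ratio of ∫_{x₀}^{L/2} Ψ² over ∫_{-L/2}^{x₀} Ψ² for the piecewise-sine solution with ν = ν_n = 2nπ/L, one has r(ν_n) = q·(1 - sin(nπ(1 - 2x₀/L))/(nπ(1 - 2x₀/L))) / (1 - sin(nπ(1 + 2x₀/L))/(nπ(1 + 2x₀/L))), where q = (L/2 - x₀)/(L/2 + x₀); moreover r(ν_n) → q as n → ∞. -/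

import Mathlib

open Real MeasureTheory intervalIntegral Filter

lemma integ_add (a c s t : ℝ) (ha : a ≠ 0) :
    ∫ x in s..t, Real.sin (a*(c + x))^2 =
      (t - s)/2 - (Real.sin (2*a*(c+t)) - Real.sin (2*a*(c+s)))/(4*a) := by
  have hderiv : ∀ x ∈ Set.uIcc s t, HasDerivAt
      (fun x => x/2 - Real.sin (2*a*(c+x))/(4*a)) (Real.sin (a*(c+x))^2) x := by
    intro x _
    have h1 : HasDerivAt (fun x : ℝ => 2*a*(c+x)) (2*a) x := by
      simpa using ((hasDerivAt_id x).const_add c).const_mul (2*a)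
    have h2 := ((h1.sin).div_const (4*a))
    have h3 := ((hasDerivAt_id x).div_const 2).sub h2
    refine h3.congr_deriv ?_
    have := Real.sin_sq_eq_half_sub (a*(c+x))
    rw [this]
    rw [show 2*(a*(c+x)) = 2*a*(c+x) by ring]
    field_simp
    ring
  rw [integral_eq_sub_of_hasDerivAt hderiv
    ((Continuous.intervalIntegrable (by fun_prop) s t))]
  ring

lemma integ_sub (a c s t : ℝ) (ha : a ≠ 0) :
    ∫ x in s..t, Real.sin (a*(c - x))^2 =
      (t - s)/2 - (Real.sin (2*a*(c-s)) - Real.sin (2*a*(c-t)))/(4*a) := by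
  have := intervalIntegral.integral_comp_neg (a := s) (b := t)
    (fun x => Real.sin (a*(c + x))^2)
  simp only [show ∀ x : ℝ, c + -x = c - x from fun x => by ring] at this
  rw [this, integ_add a c (-t) (-s) ha]
  rw [show c + -s = c - s by ring, show c + -t = c - t by ring]
  ring

lemma sinc_tendsto (c : ℝ) (hc : 0 < c) :
    Tendsto (fun n : ℕ => Real.sin (n*c)/(n*c)) atTop (nhds 0) := by
  refine squeeze_zero_norm (a := fun n : ℕ => 1/(n*c)) ?_ ?_
  · intro n
    rcases Nat.eq_zero_or_pos n with h|h
    · simp [h]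
    · have hnc : 0 < (n:ℝ)*c := mul_pos (by exact_mod_cast h) hc
      rw [Real.norm_eq_abs, abs_div, abs_of_pos hnc]
      exact (div_le_div_iff_of_pos_right hnc).mpr (Real.abs_sin_le_one _)
  · have h1 : Tendsto (fun n : ℕ => (n:ℝ)*c) atTop atTop :=
      (tendsto_natCast_atTop_atTop).atTop_mul_const hc
    have := h1.inv_tendsto_atTop
    simp only [Pi.inv_def] at this
    simpa [one_div] using this

theorem stmt_15 (L x₀ : ℝ) (hL : 0 < L) (hx₀ : 0 ≤ x₀) (hx₀' : x₀ < L/2)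
    (q : ℝ) (hq : q = (L/2 - x₀)/(L/2 + x₀))
    (Ψ : ℝ → ℝ → ℝ)
    (hΨ : ∀ ν x, Ψ ν x = if x ≤ x₀ then
        Real.sin (ν/2*(L/2 - x₀)) * Real.sin (ν/2*(L/2 + x))
      else
        Real.sin (ν/2*(L/2 + x₀)) * Real.sin (ν/2*(L/2 - x)))
    (r : ℝ → ℝ)
    (hr : ∀ ν, r ν = (∫ x in x₀..(L/2), (Ψ ν x)^2) / (∫ x in (-(L/2))..x₀, (Ψ ν x)^2)) :
    (∀ n : ℕ, 1 ≤ n →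
      Real.sin ((n*π/L)*(L/2 - x₀)) ≠ 0 → Real.sin ((n*π/L)*(L/2 + x₀)) ≠ 0 →
      r (2*n*π/L) =
        q * (1 - Real.sin (n*π*(1 - 2*x₀/L))/(n*π*(1 - 2*x₀/L)))
          / (1 - Real.sin (n*π*(1 + 2*x₀/L))/(n*π*(1 + 2*x₀/L)))) ∧
    Tendsto (fun n : ℕ =>
        q * (1 - Real.sin (n*π*(1 - 2*x₀/L))/(n*π*(1 - 2*x₀/L)))
          / (1 - Real.sin (n*π*(1 + 2*x₀/L))/(n*π*(1 + 2*x₀/L))))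
      atTop (nhds q) := by
  have hL0 : L ≠ 0 := hL.ne'
  have hm : 0 < L/2 - x₀ := by linarith
  have hp : 0 < L/2 + x₀ := by linarith
  constructor
  · intro n hn hsm hsp
    have hnpos : (0:ℝ) < n := by exact_mod_cast hn
    set a : ℝ := n*π/L with ha_def
    have ha : 0 < a := by
      apply div_pos (mul_pos hnpos Real.pi_pos) hL
    have hν2 : (2*(n:ℝ)*π/L)/2 = a := by rw [ha_def]; ring
    set θm : ℝ := (n:ℝ)*π*(1 - 2*x₀/L) with hθm_def
    set θp : ℝ := (n:ℝ)*π*(1 + 2*x₀/L) with hθp_def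
    have hθm : θm = 2*a*(L/2 - x₀) := by rw [hθm_def, ha_def]; field_simp
    have hθp : θp = 2*a*(L/2 + x₀) := by rw [hθp_def, ha_def]; field_simp
    have hθmpos : 0 < θm := by rw [hθm]; positivity
    have hθppos : 0 < θp := by rw [hθp]; positivity
    -- the two sine squares are equal
    have hsplitp : a*(L/2 + x₀) = n*π/2 + a*x₀ := by rw [ha_def]; field_simp
    have hsplitm : a*(L/2 - x₀) = n*π/2 - a*x₀ := by rw [ha_def]; field_simp
    have hzero : Real.sin ((n:ℝ)*π/2) * Real.cos ((n:ℝ)*π/2) = 0 := by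
      have h1 : Real.sin ((n:ℝ)*π) = 0 := Real.sin_nat_mul_pi n
      have h2 := Real.sin_two_mul ((n:ℝ)*π/2)
      rw [show 2*((n:ℝ)*π/2) = (n:ℝ)*π by ring] at h2
      linarith
    have hsq : Real.sin (a*(L/2 + x₀))^2 = Real.sin (a*(L/2 - x₀))^2 := by
      rw [hsplitp, hsplitm, Real.sin_add, Real.sin_sub]
      linear_combination 4 * Real.cos (a*x₀) * Real.sin (a*x₀) * hzero
    -- compute numerator integral
    have hnum : (∫ x in x₀..(L/2), (Ψ (2*n*π/L) x)^2)
        = Real.sin (a*(L/2 + x₀))^2 * ((L/2 - x₀)/2 - Real.sin θm/(4*a)) := by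
      have hcong : ∫ x in x₀..(L/2), (Ψ (2*n*π/L) x)^2
          = ∫ x in x₀..(L/2),
              Real.sin (a*(L/2 + x₀))^2 * Real.sin (a*(L/2 - x))^2 := by
        apply intervalIntegral.integral_congr_ae
        filter_upwards with x hx
        rw [Set.uIoc_of_le (by linarith : x₀ ≤ L/2)] at hx
        rw [hΨ, if_neg (not_le.mpr hx.1), hν2]
        ring
      rw [hcong, intervalIntegral.integral_const_mul,
        integ_sub a (L/2) x₀ (L/2) ha.ne']
      rw [show L/2 - L/2 = 0 by ring, mul_zero, Real.sin_zero, ← hθm]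
      ring
    -- compute denominator integral
    have hden : (∫ x in (-(L/2))..x₀, (Ψ (2*n*π/L) x)^2)
        = Real.sin (a*(L/2 - x₀))^2 * ((L/2 + x₀)/2 - Real.sin θp/(4*a)) := by
      have hcong : ∫ x in (-(L/2))..x₀, (Ψ (2*n*π/L) x)^2
          = ∫ x in (-(L/2))..x₀,
              Real.sin (a*(L/2 - x₀))^2 * Real.sin (a*(L/2 + x))^2 := by
        apply intervalIntegral.integral_congr
        intro x hx
        rw [Set.uIcc_of_le (by linarith : -(L/2) ≤ x₀)] at hx
        simp only [hΨ, if_pos hx.2, hν2]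
        ring
      rw [hcong, intervalIntegral.integral_const_mul,
        integ_add a (L/2) (-(L/2)) x₀ ha.ne']
      rw [show L/2 + -(L/2) = 0 by ring, mul_zero, Real.sin_zero, ← hθp]
      ring
    -- nonvanishing facts
    have hsm' : Real.sin (a*(L/2 - x₀)) ≠ 0 := by rwa [ha_def]
    have hB : 0 < 1 - Real.sin θp/θp := by
      have := Real.sin_lt hθppos
      have h2 : Real.sin θp / θp < 1 := (div_lt_one hθppos).mpr this
      linarith
    clear_value a θm θp
    have e1 : (L/2 - x₀)/2 - Real.sin θm/(4*a)
        = (L/2 - x₀)/2 * (1 - Real.sin θm/θm) := by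
      have e1' : (L/2 - x₀)/2 * (Real.sin θm/θm) = Real.sin θm/(4*a) := by
        rw [div_mul_div_comm, div_eq_div_iff
          (mul_ne_zero two_ne_zero hθmpos.ne') (by norm_num [ha.ne'] : (4:ℝ)*a ≠ 0), hθm]
        ring
      rw [mul_sub, mul_one, e1']
    have e2 : (L/2 + x₀)/2 - Real.sin θp/(4*a)
        = (L/2 + x₀)/2 * (1 - Real.sin θp/θp) := by
      have e2' : (L/2 + x₀)/2 * (Real.sin θp/θp) = Real.sin θp/(4*a) := by
        rw [div_mul_div_comm, div_eq_div_iff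
          (mul_ne_zero two_ne_zero hθppos.ne') (by norm_num [ha.ne'] : (4:ℝ)*a ≠ 0), hθp]
        ring
      rw [mul_sub, mul_one, e2']
    rw [hr, hnum, hden, hsq, e1, e2, hq]
    have hss : Real.sin (a*(L/2 - x₀))^2 ≠ 0 := pow_ne_zero 2 hsm'
    rw [mul_div_mul_left _ _ hss, mul_div_mul_comm,
      show (L/2 - x₀)/2/((L/2 + x₀)/2) = (L/2 - x₀)/(L/2 + x₀) by
        rw [div_div_div_comm, div_self (two_ne_zero), div_one]
      , mul_div_assoc]
  · have hneg := sinc_tendsto (π*(1 - 2*x₀/L))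
      (by
        have : 2*x₀/L < 1 := (div_lt_one hL).mpr (by linarith)
        exact mul_pos Real.pi_pos (by linarith))
    have hpos2 := sinc_tendsto (π*(1 + 2*x₀/L))
      (by
        have : 0 ≤ 2*x₀/L := by positivity
        exact mul_pos Real.pi_pos (by linarith))
    have hA : Tendsto (fun n : ℕ =>
        q * (1 - Real.sin ((n:ℝ)*(π*(1 - 2*x₀/L)))/((n:ℝ)*(π*(1 - 2*x₀/L)))))
        atTop (nhds (q * (1 - 0))) :=
      Tendsto.mul tendsto_const_nhds (Tendsto.sub tendsto_const_nhds hneg)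
    have hBt : Tendsto (fun n : ℕ =>
        1 - Real.sin ((n:ℝ)*(π*(1 + 2*x₀/L)))/((n:ℝ)*(π*(1 + 2*x₀/L))))
        atTop (nhds (1 - 0)) :=
      Tendsto.sub tendsto_const_nhds hpos2
    have key := hA.div hBt (by norm_num)
    rw [show q * (1 - 0) / (1 - 0) = q by ring] at key
    refine key.congr (fun n => ?_)
    simp only [Pi.div_apply, ← mul_assoc]
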